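/- Let ε > 0, let U ⊆ ℝ² be open and bounded, and let u : ℤ² → ℝ. Then there exists ũ : ℤ² → ℝ with ũ(i) − u(i) ∈ ℤ for every i ∈ ℤ², such that for every i ∈ Z_ε^{e₁}(U) one has ũ(i + e₁) − ũ(i) = E(u(i + e₁) − u(i)), where E(t) := t − ⌈t − 1/2⌉; consequently F_ε^{screw}(u,U) = F_ε^{screw}(ũ,U) = F_ε^{edge}(ũ,U). -/

import Mathlib

open scoped ENNReal

/-- The plane `ℝ²` with the Euclidean norm. -/
abbrev Plane : Type := EuclideanSpace ℝ (Fin 2)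

/-- The lattice point `i ∈ ℤ²` viewed as a point of the plane. -/
noncomputable def toPlane (i : ℤ × ℤ) : Plane :=
  (WithLp.equiv 2 (Fin 2 → ℝ)).symm ![(i.1 : ℝ), (i.2 : ℝ)]

/-- `Z_ε^{e}(A)`: the lattice points `i` such that the closed segment `[εi, ε(i+e)]`
is contained in `A`. -/
def latticeSeg (ε : ℝ) (e : ℤ × ℤ) (A : Set Plane) : Set (ℤ × ℤ) :=
  {i | segment ℝ (ε • toPlane i) (ε • toPlane (i + e)) ⊆ A}

/-- The distance of a real number to the set of integers. -/
noncomputable def distZ (t : ℝ) : ℝ := ⨅ n : ℤ, |t - n|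

/-- The distance of a real number to the set of half-integers `(1/2)ℤ`. -/
noncomputable def distHalfZ (t : ℝ) : ℝ := ⨅ n : ℤ, |t - n / 2|

/-- The interaction potential `f₀(t) = 2π²t²`. -/
noncomputable def f0 (t : ℝ) : ℝ := 2 * Real.pi ^ 2 * t ^ 2

/-- The interaction potential `f₁(t) = 2π²·dist(t,ℤ)²`. -/
noncomputable def f1 (t : ℝ) : ℝ := 2 * Real.pi ^ 2 * distZ t ^ 2

/-- The interaction potential `f_{1/2}(t) = 2π²·dist(t,(1/2)ℤ)²`. -/
noncomputable def fHalf (t : ℝ) : ℝ := 2 * Real.pi ^ 2 * distHalfZ t ^ 2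

/-- The edge-dislocation energy `F_ε^{edge}(u,A)`, a sum in `[0,∞]`. -/
noncomputable def Fedge (ε : ℝ) (u : ℤ × ℤ → ℝ) (A : Set Plane) : ℝ≥0∞ :=
  (∑' i : latticeSeg ε (1, 0) A, ENNReal.ofReal (f0 (u ((i : ℤ × ℤ) + (1, 0)) - u (i : ℤ × ℤ))))
    + ∑' i : latticeSeg ε (0, 1) A, ENNReal.ofReal (f1 (u ((i : ℤ × ℤ) + (0, 1)) - u (i : ℤ × ℤ)))

/-- The screw-dislocation energy `F_ε^{screw}(u,A)`, a sum in `[0,∞]`. -/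
noncomputable def Fscrew (ε : ℝ) (u : ℤ × ℤ → ℝ) (A : Set Plane) : ℝ≥0∞ :=
  (∑' i : latticeSeg ε (1, 0) A, ENNReal.ofReal (f1 (u ((i : ℤ × ℤ) + (1, 0)) - u (i : ℤ × ℤ))))
    + ∑' i : latticeSeg ε (0, 1) A, ENNReal.ofReal (f1 (u ((i : ℤ × ℤ) + (0, 1)) - u (i : ℤ × ℤ)))

/-- The partial-edge-dislocation energy `F_ε^{p-edge}(u,A)` (with parameter `α`),
a sum in `[0,∞]`. -/
noncomputable def Fpedge (α ε : ℝ) (u : ℤ × ℤ → ℝ) (A : Set Plane) : ℝ≥0∞ :=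
  (∑' i : latticeSeg ε (1, 0) A, ENNReal.ofReal (f0 (u ((i : ℤ × ℤ) + (1, 0)) - u (i : ℤ × ℤ))))
    + (∑' i : latticeSeg ε (0, 1) A,
        ENNReal.ofReal (fHalf (u ((i : ℤ × ℤ) + (0, 1)) - u (i : ℤ × ℤ))))
    + ENNReal.ofReal (α / Real.pi ^ 2 * ε) *
        ∑' i : latticeSeg ε (0, 2) A, ENNReal.ofReal (f1 (u ((i : ℤ × ℤ) + (0, 2)) - u (i : ℤ × ℤ)))

/-- The elastic part `E(t) = t − ⌈t − 1/2⌉` of an increment `t`. -/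
noncomputable def elast (t : ℝ) : ℝ := t - ⌈t - 1 / 2⌉

lemma exists_partial (f : ℤ → ℤ) : ∃ h : ℤ → ℤ, ∀ n, h (n + 1) = h n + f n := by
  refine ⟨fun n => (Finset.Ico (0 : ℤ) n).sum f - (Finset.Ico n (0 : ℤ)).sum f, fun n => ?_⟩
  beta_reduce
  rcases le_or_gt 0 n with h | h
  · have e3 : Finset.Ico (0 : ℤ) (n + 1) = insert n (Finset.Ico (0 : ℤ) n) := by
      ext k; simp [Finset.mem_Ico]; omega
    rw [e3, Finset.sum_insert (by simp), Finset.Ico_eq_empty (by omega : ¬ (n : ℤ) < 0),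
      Finset.Ico_eq_empty (by omega : ¬ (n + 1 : ℤ) < 0)]
    simp
    try ring
  · have e1 : Finset.Ico (0 : ℤ) n = ∅ := Finset.Ico_eq_empty (by omega)
    have e2 : Finset.Ico (0 : ℤ) (n + 1) = ∅ := Finset.Ico_eq_empty (by omega)
    have e3 : Finset.Ico n (0 : ℤ) = insert n (Finset.Ico (n + 1) (0 : ℤ)) := by
      ext k; simp [Finset.mem_Ico]; omega
    rw [e1, e2, e3, Finset.sum_insert (by simp)]
    simp
    try ring

lemma distZ_add_int (t : ℝ) (z : ℤ) : distZ (t + z) = distZ t := by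
  unfold distZ
  rw [← (Equiv.addRight z).iInf_comp (g := fun n : ℤ => |t + z - n|)]
  refine iInf_congr fun n => ?_
  congr 1
  push_cast [Equiv.coe_addRight]
  ring

lemma f1_of_sub_int (t : ℝ) (z : ℤ) : f1 (t - z) = f1 t := by
  unfold f1
  rw [show t - (z : ℝ) = t + ((-z : ℤ) : ℝ) by push_cast; ring, distZ_add_int]

lemma distZ_of_small {s : ℝ} (hs : |s| ≤ 1 / 2) : distZ s = |s| := by
  refine le_antisymm ?_ ?_
  · have hb : BddBelow (Set.range fun n : ℤ => |s - n|) := ⟨0, by rintro x ⟨n, rfl⟩; positivity⟩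
    simpa [distZ] using ciInf_le hb (0 : ℤ)
  · refine le_ciInf fun n => ?_
    rcases eq_or_ne n 0 with rfl | hn
    · simp
    · have h1 : (1 : ℝ) ≤ |(n : ℝ)| := by
        rw [← Int.cast_abs]; exact_mod_cast Int.one_le_abs (by simpa using hn)
      have h2 : |(n : ℝ)| - |s| ≤ |(n : ℝ) - s| := abs_sub_abs_le_abs_sub _ _
      rw [abs_sub_comm] at h2
      linarith
lemma elast_abs_le (t : ℝ) : |elast t| ≤ 1 / 2 := by
  have h1 := Int.le_ceil (t - 1 / 2)
  have h2 := Int.ceil_lt_add_one (t - 1 / 2)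
  rw [abs_le]; unfold elast; constructor <;> linarith

lemma f1_elast (t : ℝ) : f1 (elast t) = f0 (elast t) := by
  unfold f1 f0
  rw [distZ_of_small (elast_abs_le t), sq_abs]

/-- for `ε > 0`, `U` open and bounded, and any displacement `u : ℤ² → ℝ`, there is
`ũ` with `ũ − u` integer-valued such that horizontal increments of `ũ` in `U` equal the elastic
parts of those of `u`; consequently `F_ε^{screw}(u,U) = F_ε^{screw}(ũ,U) = F_ε^{edge}(ũ,U)`. -/
theorem stmt9 (ε : ℝ) (hε : 0 < ε) (U : Set Plane) (hUo : IsOpen U)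
    (hUb : Bornology.IsBounded U) (u : ℤ × ℤ → ℝ) :
    ∃ ut : ℤ × ℤ → ℝ,
      (∀ i : ℤ × ℤ, ∃ z : ℤ, ut i - u i = z) ∧
      (∀ i ∈ latticeSeg ε (1, 0) U, ut (i + (1, 0)) - ut i = elast (u (i + (1, 0)) - u i)) ∧
      Fscrew ε u U = Fscrew ε ut U ∧ Fscrew ε ut U = Fedge ε ut U := by
  classical
  set d : ℤ × ℤ → ℤ := fun i => ⌈u (i + (1, 0)) - u i - 1 / 2⌉ with hd
  choose h hh using fun m : ℤ => exists_partial (fun n => d (n, m))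
  set c : ℤ × ℤ → ℤ := fun i => h i.2 i.1 with hc
  set ut : ℤ × ℤ → ℝ := fun i => u i - c i with hut
  have hcstep : ∀ i : ℤ × ℤ, c (i + (1, 0)) = c i + d i := by
    intro i
    have h1 := hh i.2 i.1
    have h2 : (i + ((1 : ℤ), (0 : ℤ))).1 = i.1 + 1 := by simp
    have h3 : (i + ((1 : ℤ), (0 : ℤ))).2 = i.2 := by simp
    simp only [hc, h2, h3, h1]
  have key : ∀ i : ℤ × ℤ, ut (i + (1, 0)) - ut i = elast (u (i + (1, 0)) - u i) := by
    intro i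
    simp only [hut, hcstep i, elast, hd]
    push_cast
    ring
  have hf : ∀ i e : ℤ × ℤ, f1 (ut (i + e) - ut i) = f1 (u (i + e) - u i) := by
    intro i e
    have h1 : ut (i + e) - ut i = (u (i + e) - u i) - ((c (i + e) - c i : ℤ) : ℝ) := by
      simp only [hut]; push_cast; ring
    rw [h1, f1_of_sub_int]
  refine ⟨ut, fun i => ⟨-c i, by simp only [hut]; push_cast; ring⟩, fun i _ => key i, ?_, ?_⟩
  · unfold Fscrew
    congr 1
    · exact tsum_congr fun i => by rw [hf]
    · exact tsum_congr fun i => by rw [hf]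
  · unfold Fscrew Fedge
    congr 1
    exact tsum_congr fun i => by rw [key, f1_elast]
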